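/- For any sets X and Y over a complete nonarchimedean field K, there is a natural isometric isomorphism of Banach spaces c₀(X) ⊗̂ c₀(Y) ≅ c₀(X × Y), where ⊗̂ denotes the completed projective tensor product. -/

import Mathlib

set_option maxSynthPendingDepth 2
open ZeroAtInfty Filter Topology Set

set_option linter.unusedSectionVars false
namespace C0Aux

variable {K : Type*} [NontriviallyNormedField K] [CompleteSpace K] [IsUltrametricDist K]
variable {α : Type*} [TopologicalSpace α] [DiscreteTopology α]

lemma norm_apply_le (f : C₀(α, K)) (a : α) : ‖f a‖ ≤ ‖f‖ :=
  BoundedContinuousFunction.norm_coe_le_norm f.toBCF a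

lemma norm_le {f : C₀(α, K)} {C : ℝ} (h0 : 0 ≤ C) (h : ∀ a, ‖f a‖ ≤ C) : ‖f‖ ≤ C := by
  rw [← ZeroAtInftyContinuousMap.norm_toBCF_eq_norm]
  exact (BoundedContinuousFunction.norm_le h0).mpr h

lemma finite_norm_ge (f : C₀(α, K)) {ε : ℝ} (hε : 0 < ε) : {a | ε ≤ ‖f a‖}.Finite := by
  have h := zero_at_infty f
  rw [cocompact_eq_cofinite] at h
  have := Metric.tendsto_nhds.mp h ε hε
  rw [eventually_cofinite] at this
  convert this using 2 with a
  simp [dist_zero_right, not_lt]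

open Classical in
noncomputable def delta (a : α) (k : K) : C₀(α, K) where
  toFun := fun b => if b = a then k else 0
  continuous_toFun := continuous_of_discreteTopology
  zero_at_infty' := by
    rw [cocompact_eq_cofinite]
    apply Tendsto.congr' _ (tendsto_const_nhds (x := (0:K)))
    rw [EventuallyEq, eventually_cofinite]
    apply (Set.finite_singleton a).subset
    intro b hb
    simp only [mem_setOf_eq] at hb
    by_contra hba
    simp only [Set.mem_singleton_iff] at hba
    exact hb (if_neg hba).symm

open Classical in
lemma delta_apply (a : α) (k : K) (b : α) : delta a k b = if b = a then k else 0 := rfl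

@[simp] lemma delta_same (a : α) (k : K) : delta a k a = k := by simp [delta_apply]


lemma norm_delta_le (a : α) (k : K) : ‖delta a k‖ ≤ ‖k‖ := by
  apply norm_le (norm_nonneg k)
  intro b
  rw [delta_apply]
  split <;> simp

lemma delta_eq_smul (a : α) (k : K) : delta a k = k • delta a (1 : K) := by
  ext b
  rw [ZeroAtInftyContinuousMap.coe_smul, Pi.smul_apply, delta_apply, delta_apply]
  split <;> simp

/-- Evaluation at a point as a continuous linear map. -/
noncomputable def evalCLM (a : α) : C₀(α, K) →L[K] K :=
  LinearMap.mkContinuous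
    { toFun := fun f => f a
      map_add' := fun f g => rfl
      map_smul' := fun k f => rfl } 1
    (fun f => by simpa using norm_apply_le f a)

@[simp] lemma evalCLM_apply (a : α) (f : C₀(α, K)) : evalCLM a f = f a := rfl

lemma sum_apply (F : Finset α) (φ : α → C₀(α, K)) (b : α) :
    (∑ a ∈ F, φ a) b = ∑ a ∈ F, φ a b := by
  exact map_sum (evalCLM (K := K) b) φ F

open Classical in
lemma hasSum_delta (f : C₀(α, K)) : HasSum (fun a => delta a (f a)) f := by
  classical
  rw [HasSum, SummationFilter.unconditional_filter]
  rw [Metric.tendsto_atTop]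
  intro ε hε
  refine ⟨(finite_norm_ge f (half_pos hε)).toFinset, fun F hF => ?_⟩
  rw [dist_eq_norm]
  have : ‖(∑ a ∈ F, delta a (f a)) - f‖ ≤ ε / 2 := by
    apply norm_le (le_of_lt (half_pos hε))
    intro b
    rw [ZeroAtInftyContinuousMap.coe_sub, Pi.sub_apply, sum_apply]
    have : ∑ a ∈ F, delta a (f a) b = if b ∈ F then f b else 0 := by
      rw [← Finset.sum_ite_eq F b (fun a => f a)]
      exact Finset.sum_congr rfl fun a _ => delta_apply a (f a) b
    rw [this]
    split
    · simp [le_of_lt (half_pos hε)]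
    · rename_i hb
      rw [zero_sub, norm_neg]
      by_contra hc
      exact hb (hF (by simp only [Set.Finite.mem_toFinset, Set.mem_setOf_eq]; linarith))
  linarith

lemma tendsto_cofinite_zero_of_finite {ι E : Type*} [SeminormedAddCommGroup E] {f : ι → E}
    (h : ∀ ε > 0, {i | ε ≤ ‖f i‖}.Finite) : Tendsto f cofinite (𝓝 0) := by
  rw [Metric.tendsto_nhds]
  intro ε hε
  rw [eventually_cofinite]
  convert h ε hε using 2 with i
  simp [dist_zero_right, not_lt]


variable {X Y : Type*} [TopologicalSpace X] [DiscreteTopology X]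
  [TopologicalSpace Y] [DiscreteTopology Y]

/-- The pointwise product function `(x, y) ↦ f x * g y` as an element of `C₀(X × Y, K)`. -/
noncomputable def mfun (f : C₀(X, K)) (g : C₀(Y, K)) : C₀(X × Y, K) where
  toFun := fun p => f p.1 * g p.2
  continuous_toFun := continuous_of_discreteTopology
  zero_at_infty' := by
    rw [cocompact_eq_cofinite]
    apply tendsto_cofinite_zero_of_finite
    intro ε hε
    have hg1 : (0:ℝ) < ‖g‖ + 1 := by positivity
    have hf1 : (0:ℝ) < ‖f‖ + 1 := by positivity
    apply Set.Finite.subset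
      (Set.Finite.prod (finite_norm_ge f (div_pos hε hg1)) (finite_norm_ge g (div_pos hε hf1)))
    rintro ⟨x, y⟩ h
    simp only [Set.mem_setOf_eq, norm_mul] at h
    constructor
    · simp only [Set.mem_setOf_eq]
      rw [div_le_iff₀ hg1]
      calc ε ≤ ‖f x‖ * ‖g y‖ := h
        _ ≤ ‖f x‖ * (‖g‖ + 1) := by
            apply mul_le_mul_of_nonneg_left _ (norm_nonneg _)
            exact le_trans (norm_apply_le g y) (by linarith)
    · simp only [Set.mem_setOf_eq]
      rw [div_le_iff₀ hf1]
      calc ε ≤ ‖f x‖ * ‖g y‖ := h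
        _ = ‖g y‖ * ‖f x‖ := mul_comm _ _
        _ ≤ ‖g y‖ * (‖f‖ + 1) := by
            apply mul_le_mul_of_nonneg_left _ (norm_nonneg _)
            exact le_trans (norm_apply_le f x) (by linarith)

@[simp] lemma mfun_apply (f : C₀(X, K)) (g : C₀(Y, K)) (p : X × Y) :
    mfun f g p = f p.1 * g p.2 := rfl

/-- The multiplication bilinear map `C₀(X, K) →L C₀(Y, K) →L C₀(X × Y, K)`. -/
noncomputable def mulCLM : C₀(X, K) →L[K] C₀(Y, K) →L[K] C₀(X × Y, K) :=
  LinearMap.mkContinuous₂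
    (LinearMap.mk₂ K mfun
      (fun f f' g => by ext p; simp [add_mul])
      (fun k f g => by ext p; simp [mul_assoc])
      (fun f g g' => by ext p; simp [mul_add])
      (fun k f g => by
        ext p
        simp only [mfun_apply, ZeroAtInftyContinuousMap.coe_smul, Pi.smul_apply, smul_eq_mul]
        ring))
    1
    (fun f g => by
      apply norm_le (by positivity)
      intro p
      simp only [LinearMap.mk₂_apply, mfun_apply, norm_mul, one_mul]
      exact mul_le_mul (norm_apply_le f p.1) (norm_apply_le g p.2) (norm_nonneg _) (norm_nonneg _))

@[simp] lemma mulCLM_apply (f : C₀(X, K)) (g : C₀(Y, K)) (p : X × Y) :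
    mulCLM (K := K) f g p = f p.1 * g p.2 := rfl

lemma norm_mulCLM (f : C₀(X, K)) (g : C₀(Y, K)) : ‖mulCLM (K := K) f g‖ = ‖f‖ * ‖g‖ := by
  apply le_antisymm
  · apply norm_le (by positivity)
    intro p
    rw [mulCLM_apply, norm_mul]
    exact mul_le_mul (norm_apply_le f p.1) (norm_apply_le g p.2) (norm_nonneg _) (norm_nonneg _)
  · have key : ∀ x : X, ‖f x‖ * ‖g‖ ≤ ‖mulCLM (K := K) f g‖ := by
      intro x
      rcases eq_or_lt_of_le (norm_nonneg (f x)) with h0 | h0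
      · rw [← h0, zero_mul]; exact norm_nonneg _
      · rw [mul_comm, ← le_div_iff₀ h0]
        apply norm_le (by positivity)
        intro y
        rw [le_div_iff₀ h0, mul_comm, ← norm_mul]
        exact norm_apply_le (mulCLM (K := K) f g) (x, y)
    rcases eq_or_lt_of_le (norm_nonneg g) with h0 | h0
    · rw [← h0, mul_zero]; exact norm_nonneg _
    · rw [← le_div_iff₀ h0]
      apply norm_le (by positivity)
      intro x
      rw [le_div_iff₀ h0]
      exact key x

section UP

variable {Z : Type*} [NormedAddCommGroup Z] [NormedSpace K Z] [CompleteSpace Z]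
  [IsUltrametricDist Z]
variable (B : C₀(X, K) →L[K] C₀(Y, K) →L[K] Z)

/-- The image of the elementary "matrix unit" under the bilinear map `B`. -/
noncomputable def w (p : X × Y) : Z := B (delta p.1 1) (delta p.2 1)

lemma norm_w_le {c : ℝ} (hc0 : 0 ≤ c) (hc : ∀ f g, ‖B f g‖ ≤ c * ‖f‖ * ‖g‖) (p : X × Y) :
    ‖w B p‖ ≤ c := by
  have h1 : ‖delta (K := K) p.1 1‖ ≤ 1 := by simpa using norm_delta_le (K := K) p.1 1
  have h2 : ‖delta (K := K) p.2 1‖ ≤ 1 := by simpa using norm_delta_le (K := K) p.2 1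
  calc ‖w B p‖ ≤ c * ‖delta (K := K) p.1 1‖ * ‖delta (K := K) p.2 1‖ := hc _ _
    _ ≤ c * 1 * 1 := by
        apply mul_le_mul _ h2 (norm_nonneg _) (by positivity)
        exact mul_le_mul_of_nonneg_left h1 hc0
    _ = c := by ring

lemma summable_term (h : C₀(X × Y, K)) : Summable (fun p => h p • w B p) := by
  apply NonarchimedeanAddGroup.summable_of_tendsto_cofinite_zero
  apply tendsto_cofinite_zero_of_finite
  intro ε hε
  have hB1 : (0:ℝ) < ‖B‖ + 1 := by positivity
  apply (finite_norm_ge h (div_pos hε hB1)).subset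
  intro p hp
  simp only [Set.mem_setOf_eq] at hp ⊢
  rw [div_le_iff₀ hB1]
  calc ε ≤ ‖h p • w B p‖ := hp
    _ = ‖h p‖ * ‖w B p‖ := norm_smul _ _
    _ ≤ ‖h p‖ * (‖B‖ + 1) := by
        apply mul_le_mul_of_nonneg_left _ (norm_nonneg _)
        exact le_trans (norm_w_le B (norm_nonneg B) (fun f g => B.le_opNorm₂ f g) p) (by linarith)

lemma norm_tsum_term_le {c : ℝ} (hc0 : 0 ≤ c) (hc : ∀ f g, ‖B f g‖ ≤ c * ‖f‖ * ‖g‖)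
    (h : C₀(X × Y, K)) : ‖∑' p, h p • w B p‖ ≤ c * ‖h‖ := by
  apply IsUltrametricDist.norm_tsum_le_of_forall_le_of_nonneg
    (mul_nonneg hc0 (norm_nonneg _))
  intro p
  rw [norm_smul, mul_comm c ‖h‖]
  exact mul_le_mul (norm_apply_le h p) (norm_w_le B hc0 hc p) (norm_nonneg _) (norm_nonneg _)

/-- The canonical linear map `C₀(X × Y, K) →L[K] Z` induced by `B`. -/
noncomputable def TCLM : C₀(X × Y, K) →L[K] Z :=
  LinearMap.mkContinuous
    { toFun := fun h => ∑' p, h p • w B p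
      map_add' := fun h h' => by
        rw [← Summable.tsum_add (summable_term B h) (summable_term B h')]
        exact tsum_congr fun p => by
          rw [ZeroAtInftyContinuousMap.coe_add, Pi.add_apply, add_smul]
      map_smul' := fun k h => by
        simp only [RingHom.id_apply]
        rw [← Summable.tsum_const_smul k (summable_term B h)]
        exact tsum_congr fun p => by
          rw [ZeroAtInftyContinuousMap.coe_smul, Pi.smul_apply, smul_assoc] }
    ‖B‖
    (fun h => norm_tsum_term_le B (norm_nonneg B) (fun f g => B.le_opNorm₂ f g) h)

lemma TCLM_apply (h : C₀(X × Y, K)) : TCLM B h = ∑' p, h p • w B p := rfl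

lemma TCLM_mul (f : C₀(X, K)) (g : C₀(Y, K)) : TCLM B (mulCLM (K := K) f g) = B f g := by
  have hsum : HasSum (fun p : X × Y => (mulCLM (K := K) f g) p • w B p)
      (TCLM B (mulCLM (K := K) f g)) := (summable_term B _).hasSum
  have inner : ∀ x : X, HasSum (fun y => (mulCLM (K := K) f g) (x, y) • w B (x, y))
      (B (delta x (f x)) g) := by
    intro x
    have h1 := (hasSum_delta g).mapL (B (delta x (f x)))
    have e : ∀ y, B (delta x (f x)) (delta y (g y)) =
        (mulCLM (K := K) f g) (x, y) • w B (x, y) := by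
      intro y
      rw [mulCLM_apply, delta_eq_smul x (f x), delta_eq_smul y (g y)]
      simp only [map_smul, ContinuousLinearMap.smul_apply, smul_smul]
      rw [mul_comm]
      rfl
    rw [show (fun y => B (delta x (f x)) (delta y (g y))) =
      fun y => (mulCLM (K := K) f g) (x, y) • w B (x, y) from funext e] at h1
    exact h1
  have houter := (hasSum_delta f).mapL (B.flip g)
  simp only [ContinuousLinearMap.flip_apply] at houter
  exact (houter.unique (hsum.prod_fiberwise inner)).symm

lemma TCLM_unique (T' : C₀(X × Y, K) →L[K] Z)
    (hT' : ∀ (f : C₀(X, K)) (g : C₀(Y, K)), T' (mulCLM (K := K) f g) = B f g) :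
    T' = TCLM B := by
  ext h
  have hs := (hasSum_delta h).mapL T'
  have e : ∀ p : X × Y, T' (delta p (h p)) = h p • w B p := by
    intro p
    have edelta : delta p (h p) = mulCLM (K := K) (delta p.1 (h p)) (delta p.2 (1 : K)) := by
      ext q
      rw [mulCLM_apply, delta_apply, delta_apply, delta_apply]
      by_cases h1 : q.1 = p.1 <;> by_cases h2 : q.2 = p.2 <;>
        simp [Prod.ext_iff, h1, h2]
    rw [edelta, hT', delta_eq_smul p.1 (h p), map_smul, ContinuousLinearMap.smul_apply]
    rfl
  rw [show (fun p : X × Y => T' (delta p (h p))) = fun p => h p • w B p from funext e] at hs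
  rw [TCLM_apply]
  exact hs.tsum_eq.symm

end UP

end C0Aux

set_option maxSynthPendingDepth 1


open ZeroAtInfty

/-- For any sets `X`, `Y` over a complete nonarchimedean field `K`, the Banach space
`c₀(X × Y)` together with the bilinear map `(f, g) ↦ ((x,y) ↦ f x * g y)` satisfies the
universal property (isometrically) of the completed projective tensor product; i.e. there is
a natural isometric isomorphism `c₀(X) ⊗̂ c₀(Y) ≅ c₀(X × Y)`. -/
theorem stmt1.{u} {K : Type*} [NontriviallyNormedField K] [CompleteSpace K] [IsUltrametricDist K]
    {X Y : Type*} [TopologicalSpace X] [DiscreteTopology X]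
    [TopologicalSpace Y] [DiscreteTopology Y] :
    ∃ m : C₀(X, K) →L[K] C₀(Y, K) →L[K] C₀(X × Y, K),
      (∀ (f : C₀(X, K)) (g : C₀(Y, K)) (x : X) (y : Y), m f g (x, y) = f x * g y) ∧
      (∀ (f : C₀(X, K)) (g : C₀(Y, K)), ‖m f g‖ = ‖f‖ * ‖g‖) ∧
      (∀ (Z : Type u) [NormedAddCommGroup Z] [NormedSpace K Z] [CompleteSpace Z]
          [IsUltrametricDist Z] (B : C₀(X, K) →L[K] C₀(Y, K) →L[K] Z),
        ∃! T : C₀(X × Y, K) →L[K] Z,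
          (∀ (f : C₀(X, K)) (g : C₀(Y, K)), T (m f g) = B f g) ∧
          ‖T‖ = sInf {c : ℝ | 0 ≤ c ∧ ∀ (f : C₀(X, K)) (g : C₀(Y, K)),
            ‖B f g‖ ≤ c * ‖f‖ * ‖g‖}) := by
  refine ⟨C0Aux.mulCLM, fun f g x y => rfl, C0Aux.norm_mulCLM, ?_⟩
  intro Z _ _ _ _ B
  refine ⟨C0Aux.TCLM B, ⟨C0Aux.TCLM_mul B, ?_⟩, fun T' hT' => C0Aux.TCLM_unique B T' hT'.1⟩
  have hmem : ‖C0Aux.TCLM B‖ ∈ {c : ℝ | 0 ≤ c ∧ ∀ (f : C₀(X, K)) (g : C₀(Y, K)),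
      ‖B f g‖ ≤ c * ‖f‖ * ‖g‖} := by
    set_option maxSynthPendingDepth 2 in
    refine ⟨norm_nonneg _, fun f g => ?_⟩
    calc ‖B f g‖ = ‖C0Aux.TCLM B (C0Aux.mulCLM (K := K) f g)‖ := by rw [C0Aux.TCLM_mul]
      _ ≤ ‖C0Aux.TCLM B‖ * ‖C0Aux.mulCLM (K := K) f g‖ := ContinuousLinearMap.le_opNorm _ _
      _ = ‖C0Aux.TCLM B‖ * ‖f‖ * ‖g‖ := by rw [C0Aux.norm_mulCLM, mul_assoc]
  apply le_antisymm
  · set_option maxSynthPendingDepth 2 in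
    refine le_csInf ⟨‖B‖, norm_nonneg B, fun f g => B.le_opNorm₂ f g⟩ ?_
    rintro c ⟨hc0, hc⟩
    apply ContinuousLinearMap.opNorm_le_bound _ hc0
    intro h
    rw [C0Aux.TCLM_apply]
    exact C0Aux.norm_tsum_term_le B hc0 hc h
  · exact csInf_le ⟨0, fun c hc => hc.1⟩ hmem
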